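/- Let H = X(Xᵀ D X + G)⁻¹Xᵀ where X ∈ ℝ^{n×p}, D ∈ ℝ^{n×n} diagonal positive semidefinite, and G ∈ ℝ^{p×p} symmetric positive definite. Then for each i, H_{ii} D_{ii} < 1, so in particular 1 − H_{ii}D_{ii} > 0 and the approximate-leave-one-out correction term H_{ii}/(1 − H_{ii}D_{ii}) is well-defined. -/

import Mathlib

open Matrix

/-- for `H = X(XᵀDX + G)⁻¹Xᵀ` with `D` diagonal PSD and `G ≻ 0`,
every diagonal entry satisfies `H_{ii} D_{ii} < 1`, so the ALO correction factor
`H_{ii}/(1 - H_{ii}D_{ii})` is well-defined. -/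
theorem stmt15 (n p : ℕ) (X : Matrix (Fin n) (Fin p) ℝ) (D : Fin n → ℝ)
    (hD : ∀ i, 0 ≤ D i) (G : Matrix (Fin p) (Fin p) ℝ) (hG : G.PosDef) (i : Fin n) :
    (X * (Xᵀ * Matrix.diagonal D * X + G)⁻¹ * Xᵀ) i i * D i < 1 := by
  set M : Matrix (Fin p) (Fin p) ℝ := Xᵀ * Matrix.diagonal D * X with hM
  have hMpsd : M.PosSemidef := by
    have hd : (Matrix.diagonal D).PosSemidef := Matrix.posSemidef_diagonal_iff.mpr hD
    have h2 := hd.conjTranspose_mul_mul_same X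
    simpa [hM] using h2
  set A : Matrix (Fin p) (Fin p) ℝ := M + G with hA
  have hApd : A.PosDef := Matrix.PosDef.posSemidef_add hMpsd hG
  have hAinv : (A⁻¹).PosDef := hApd.inv
  set x : Fin p → ℝ := fun j => X i j with hx
  set w : Fin p → ℝ := A⁻¹ *ᵥ x with hw
  set t : ℝ := x ⬝ᵥ w with ht
  -- H_{ii} = t
  have hHii : (X * A⁻¹ * Xᵀ) i i = t := by
    simp only [ht, hw, Matrix.mul_apply, Matrix.mulVec, dotProduct, hx,
      Matrix.transpose_apply, Finset.sum_mul, Finset.mul_sum]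
    rw [Finset.sum_comm]
    exact Finset.sum_congr rfl fun k _ => Finset.sum_congr rfl fun j _ => by ring
  rw [hHii]
  -- t ≥ 0
  have htnn : 0 ≤ t := by
    simpa [ht, hw] using hAinv.posSemidef.dotProduct_mulVec_nonneg x
  -- A *ᵥ w = x
  have hAw : A *ᵥ w = x := by
    rw [hw, Matrix.mulVec_mulVec,
      Matrix.mul_nonsing_inv _ ((Matrix.isUnit_iff_isUnit_det A).mp hApd.isUnit),
      Matrix.one_mulVec]
  have hwAw : w ⬝ᵥ (A *ᵥ w) = t := by
    rw [hAw, dotProduct_comm, ht]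
  have hXwi : (X *ᵥ w) i = t := by
    simp [Matrix.mulVec, ht, dotProduct, hx]
  -- key: D i * t^2 ≤ w ⬝ᵥ M *ᵥ w
  have hkey : D i * t ^ 2 ≤ w ⬝ᵥ (M *ᵥ w) := by
    have hMw : w ⬝ᵥ (M *ᵥ w) = ∑ k, D k * ((X *ᵥ w) k) ^ 2 := by
      rw [hM, ← Matrix.mulVec_mulVec, ← Matrix.mulVec_mulVec, Matrix.dotProduct_mulVec,
        Matrix.vecMul_transpose]
      simp only [dotProduct, Matrix.mulVec_diagonal]
      exact Finset.sum_congr rfl fun k _ => by ring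
    rw [hMw]
    have := Finset.single_le_sum (f := fun k => D k * ((X *ᵥ w) k) ^ 2)
      (fun k _ => mul_nonneg (hD k) (sq_nonneg _)) (Finset.mem_univ i)
    simpa [hXwi] using this
  have hsplit : w ⬝ᵥ (M *ᵥ w) + w ⬝ᵥ (G *ᵥ w) = t := by
    rw [← dotProduct_add, ← Matrix.add_mulVec, ← hA, hwAw]
  rcases eq_or_lt_of_le htnn with h0 | htpos
  · simp [← h0]
  · have hwne : w ≠ 0 := by
      intro h
      have : t = 0 := by rw [ht, h, dotProduct_zero]
      linarith
    have hGw : 0 < w ⬝ᵥ (G *ᵥ w) := by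
      simpa using hG.dotProduct_mulVec_pos hwne
    have h1 : D i * t ^ 2 < t := by linarith
    nlinarith [h1, htpos]
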